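/- (Proposition 1, robustified CBF condition) Let h : ℝⁿ → ℝ be differentiable almost everywhere with ∂h/∂q = b(q) + δ(q), where ‖δ(q)‖ ≤ 2J for almost all q along trajectories. Suppose the control v(t) = q̇(t) satisfies ‖q̇(t)‖ ≤ q̇_max for all t and the robustified constraint b(q(t)) · v(t) ≥ -α·h(q(t)) + 2J·q̇_max. Then d/dt h(q(t)) ≥ -α·h(q(t)) for almost all t, and hence if h(q(t₀)) ≥ 0 then h(q(t)) ≥ 0 for all t ≥ t₀. -/

import Mathlib

open Real MeasureTheory


/-- A function differentiable at every point of `Ici a`, whose derivative is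
nonnegative almost everywhere on `Ici a`, is monotone on `Ici a`. -/
lemma monotoneOn_of_hasDerivAt_ae_nonneg {f f' : ℝ → ℝ} {a : ℝ}
    (hf : ∀ t ∈ Set.Ici a, HasDerivAt f (f' t) t)
    (h' : ∀ᵐ t ∂(volume.restrict (Set.Ici a)), 0 ≤ f' t) :
    MonotoneOn f (Set.Ici a) := by
  -- the bad set
  set N : Set ℝ := {t | t ∈ Set.Ici a ∧ f' t < 0} with hN
  have hNnull : volume N = 0 := by
    have := (ae_restrict_iff' (measurableSet_Ici)).mp h'
    rw [ae_iff] at this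
    convert this using 2
    ext t
    simp only [hN, Set.mem_setOf_eq, not_forall, not_le]
    tauto
  have hNsub : N ⊆ Set.Ici a := fun t ht => ht.1
  intro x hx y hy hxy
  rcases eq_or_lt_of_le hxy with rfl | hxy
  · exact le_rfl
  -- suffices: for every ε > 0, f x ≤ f y + ε * (y - x)
  have key : ∀ ε : ℝ, 0 < ε → f x ≤ f y + ε * (y - x) := by
    intro ε hε
    set g : ℝ → ℝ := fun t => f t + ε * t with hg
    have hgderiv : ∀ t ∈ Set.Ici a, HasDerivAt g (f' t + ε) t := by
      intro t ht
      exact ((hf t ht).add ((hasDerivAt_id t).const_mul ε)).congr_deriv (by simp)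
    -- g maps the null set N to a null set
    have hgN : volume (g '' N) = 0 := by
      apply MeasureTheory.addHaar_image_eq_zero_of_differentiableOn_of_addHaar_eq_zero
        (μ := volume) (fun t ht => ((hgderiv t (hNsub ht)).differentiableAt).differentiableWithinAt)
        hNnull
    by_contra hcon
    push_neg at hcon
    have hgy : g y < g x := by simp only [hg]; nlinarith
    -- pick z in (g y, g x) avoiding g '' N
    have : ¬ (Set.Ioo (g y) (g x) ⊆ g '' N) := by
      intro hsub
      have : volume (Set.Ioo (g y) (g x)) ≤ volume (g '' N) := measure_mono hsub
      rw [hgN, Real.volume_Ioo] at this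
      simp only [nonpos_iff_eq_zero, ENNReal.ofReal_eq_zero] at this
      linarith [sub_pos.mpr hgy]
    obtain ⟨z, hz, hzN⟩ := Set.not_subset.mp this
    -- continuity of g on [x, y]
    have hgc : ContinuousOn g (Set.Icc x y) := by
      intro t ht
      exact ((hgderiv t (le_trans hx ht.1)).continuousAt).continuousWithinAt
    -- the last time g ≥ z
    set S : Set ℝ := Set.Icc x y ∩ g ⁻¹' (Set.Ici z) with hS
    have hSclosed : IsClosed S := by
      exact hgc.preimage_isClosed_of_isClosed isClosed_Icc isClosed_Ici
    have hSne : S.Nonempty := ⟨x, ⟨le_refl x, le_of_lt hxy⟩, le_of_lt hz.2⟩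
    have hSbdd : BddAbove S := (bddAbove_Icc).mono (Set.inter_subset_left)
    set c : ℝ := sSup S with hc
    have hcS : c ∈ S := hSclosed.csSup_mem hSne hSbdd
    have hcIcc : c ∈ Set.Icc x y := hcS.1
    have hgcz : z ≤ g c := hcS.2
    have hcy : c < y := by
      rcases lt_or_eq_of_le hcIcc.2 with h | h
      · exact h
      · exfalso; rw [h] at hgcz; linarith [hz.1]
    -- everything after c in [x,y] has g < z
    have hafter : ∀ t ∈ Set.Ioc c y, g t < z := by
      intro t ht
      by_contra hzt
      push_neg at hzt
      have : t ∈ S := ⟨⟨le_trans hcIcc.1 (le_of_lt ht.1), ht.2⟩, hzt⟩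
      exact absurd (le_csSup hSbdd this) (not_le.mpr ht.1)
    -- g c = z (otherwise IVT gives a later point of S)
    have hgceq : g c = z := by
      rcases eq_or_lt_of_le hgcz with h | h
      · exact h.symm
      exfalso
      have hivt : Set.Icc (g y) (g c) ⊆ g '' Set.Icc c y :=
        intermediate_value_Icc' (le_of_lt hcy)
          (hgc.mono (Set.Icc_subset_Icc hcIcc.1 le_rfl))
      obtain ⟨t, htI, hgt⟩ := hivt ⟨le_of_lt hz.1, le_of_lt h⟩
      have htc : t ≠ c := by
        intro hEq
        rw [hEq] at hgt
        rw [hgt] at h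
        exact lt_irrefl _ h
      have := hafter t ⟨lt_of_le_of_ne htI.1 (Ne.symm htc), htI.2⟩
      rw [hgt] at this; exact lt_irrefl _ this
    -- derivative at c is ≤ 0 (right slopes negative)
    have hderc : f' c + ε ≤ 0 := by
      have hd := hgderiv c (le_trans hx hcIcc.1)
      have hslope := hd.hasDerivWithinAt (s := Set.Ioi c)
      rw [hasDerivWithinAt_iff_tendsto_slope] at hslope
      have hmem : Set.Ioi c \ {c} = Set.Ioi c := by
        ext t; simp only [Set.mem_diff, Set.mem_Ioi, Set.mem_singleton_iff]
        exact ⟨fun ht => ht.1, fun ht => ⟨ht, ne_of_gt ht⟩⟩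
      rw [hmem] at hslope
      refine le_of_tendsto hslope ?_
      filter_upwards [Ioo_mem_nhdsGT_of_mem (Set.left_mem_Ico.mpr hcy)] with t ht
      have hgt : g t < z := hafter t ⟨ht.1, le_of_lt ht.2⟩
      have : slope g c t = (g t - g c) / (t - c) := slope_def_field g c t
      rw [this, hgceq]
      apply div_nonpos_of_nonpos_of_nonneg <;> [linarith; linarith [ht.1]]
    -- contradiction: c ∈ N but z = g c ∉ g '' N
    have hcN : c ∈ N := ⟨le_trans hx hcIcc.1, by linarith⟩
    exact hzN ⟨c, hcN, hgceq⟩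
  -- pass to the limit ε → 0
  have := fun ε hε => key (ε / (y - x)) (div_pos hε (sub_pos.mpr hxy))
  refine le_of_forall_pos_le_add fun ε hε => ?_
  have h2 := this ε hε
  rw [div_mul_cancel₀] at h2
  · linarith
  · linarith

/-- Proposition 1 (robustified CBF condition): if the gradient of h splits
as a continuous part b plus a disturbance δ bounded (a.e.) by 2J, the
velocity is bounded by q̇_max, and the robustified constraint holds, then
ḣ ≥ -α·h almost everywhere, and the safe set {h ≥ 0} is forward invariant. -/
theorem robustified_cbf_condition
    {n : ℕ} (h : EuclideanSpace ℝ (Fin n) → ℝ)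
    (b : EuclideanSpace ℝ (Fin n) → EuclideanSpace ℝ (Fin n))
    (δ : ℝ → EuclideanSpace ℝ (Fin n))
    (q v : ℝ → EuclideanSpace ℝ (Fin n))
    (t₀ α J qdotmax : ℝ)
    (hα : 0 < α) (hJ : 0 ≤ J) (hqd : 0 ≤ qdotmax)
    (hq : ∀ t ≥ t₀, HasDerivAt q (v t) t)
    (hchain : ∀ t ≥ t₀,
      HasDerivAt (fun s => h (q s))
        ((inner ℝ (b (q t)) (v t) : ℝ) + (inner ℝ (δ t) (v t) : ℝ)) t)
    (hδ : ∀ᵐ t ∂(volume.restrict (Set.Ici t₀)), ‖δ t‖ ≤ 2 * J)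
    (hv : ∀ t ≥ t₀, ‖v t‖ ≤ qdotmax)
    (hcon : ∀ t ≥ t₀, (inner ℝ (b (q t)) (v t) : ℝ) ≥ -α * h (q t) + 2 * J * qdotmax) :
    (∀ᵐ t ∂(volume.restrict (Set.Ici t₀)),
        deriv (fun s => h (q s)) t ≥ -α * h (q t)) ∧
    (h (q t₀) ≥ 0 → ∀ t ≥ t₀, h (q t) ≥ 0) := by
  -- key pointwise estimate wherever the disturbance bound holds
  have hkey : ∀ t ≥ t₀, ‖δ t‖ ≤ 2 * J →
      (inner ℝ (b (q t)) (v t) : ℝ) + (inner ℝ (δ t) (v t) : ℝ) ≥ -α * h (q t) := by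
    intro t ht hδt
    have h1 : |(inner ℝ (δ t) (v t) : ℝ)| ≤ ‖δ t‖ * ‖v t‖ := abs_real_inner_le_norm _ _
    have h2 : ‖δ t‖ * ‖v t‖ ≤ 2 * J * qdotmax := by
      have := hv t ht
      have := norm_nonneg (δ t)
      have := norm_nonneg (v t)
      nlinarith
    have h3 := hcon t ht
    have := abs_le.mp h1
    nlinarith
  constructor
  · filter_upwards [hδ, ae_restrict_mem measurableSet_Ici] with t hδt ht
    rw [(hchain t ht).deriv]
    exact hkey t ht hδt
  · intro h0 t ht
    -- g s = h (q s) * exp (α s) is monotone on [t₀, ∞)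
    set g : ℝ → ℝ := fun s => h (q s) * Real.exp (α * s) with hg
    set g' : ℝ → ℝ := fun s =>
      ((inner ℝ (b (q s)) (v s) : ℝ) + (inner ℝ (δ s) (v s) : ℝ)) * Real.exp (α * s)
        + h (q s) * (α * Real.exp (α * s)) with hg'
    have hgd : ∀ s ∈ Set.Ici t₀, HasDerivAt g (g' s) s := by
      intro s hs
      have he : HasDerivAt (fun u => Real.exp (α * u)) (α * Real.exp (α * s)) s := by
        simpa [mul_comm] using (((hasDerivAt_id s).const_mul α).exp)
      exact (hchain s hs).mul he
    have hmono : MonotoneOn g (Set.Ici t₀) := by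
      apply monotoneOn_of_hasDerivAt_ae_nonneg hgd
      filter_upwards [hδ, ae_restrict_mem measurableSet_Ici] with s hδs hs
      have hk := hkey s hs hδs
      have hexp : (0:ℝ) < Real.exp (α * s) := Real.exp_pos _
      simp only [hg']
      nlinarith
    have := hmono (Set.self_mem_Ici) ht ht
    simp only [hg] at this
    have hexp : (0:ℝ) < Real.exp (α * t) := Real.exp_pos _
    nlinarith [Real.exp_pos (α * t₀)]
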